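/- Let N be a positive integer, let p, h : Fin N → ℝ and let H₁ and ρ̄ be complex N×N matrices. Assume: (1) p is injective (non-degenerate spectrum of P); (2) the map sending each ordered pair (i,j) with i ≠ j to the complex number e^{i(h_j − h_i)} is injective on such pairs (the eigenvalue gaps of H₀ are distinct modulo 2π); (3) (H₁)_{j,i} ≠ 0 for all i ≠ j (H₁ is fully connected). If for every natural number k one has Σ_{i,j} (p_j − p_i) · e^{i(h_j − h_i)k} · ρ̄_{i,j} · (H₁)_{j,i} = 0, then ρ̄_{i,j} = 0 for all i ≠ j, i.e., ρ̄ is diagonal. -/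
import Mathlib

open Finset Polynomial

theorem stmt_7 (N : ℕ) (hN : 0 < N) (p h : Fin N → ℝ)
    (H₁ ρ : Matrix (Fin N) (Fin N) ℂ)
    (hp : Function.Injective p)
    (hgaps : ∀ i j k l : Fin N, i ≠ j → k ≠ l →
      Complex.exp (Complex.I * ((h j : ℂ) - (h i : ℂ))) =
        Complex.exp (Complex.I * ((h l : ℂ) - (h k : ℂ))) → (i, j) = (k, l))
    (hH₁ : ∀ i j : Fin N, i ≠ j → H₁ j i ≠ 0)
    (hsum : ∀ k : ℕ, ∑ i : Fin N, ∑ j : Fin N,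
        ((p j : ℂ) - (p i : ℂ)) *
          Complex.exp (Complex.I * ((h j : ℂ) - (h i : ℂ)) * (k : ℂ)) *
          ρ i j * H₁ j i = 0) :
    ∀ i j : Fin N, i ≠ j → ρ i j = 0 := by
  classical
  intro i j hij
  set S : Finset (Fin N × Fin N) := Finset.univ.filter (fun x => x.1 ≠ x.2) with hSdef
  set lam : Fin N × Fin N → ℂ :=
    fun x => Complex.exp (Complex.I * ((h x.2 : ℂ) - (h x.1 : ℂ))) with hlam
  set c : Fin N × Fin N → ℂ :=
    fun x => ((p x.2 : ℂ) - (p x.1 : ℂ)) * ρ x.1 x.2 * H₁ x.2 x.1 with hc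
  have hinj : ∀ x ∈ S, ∀ y ∈ S, lam x = lam y → x = y := by
    intro x hx y hy hxy
    simp only [hSdef, Finset.mem_filter, Finset.mem_univ, true_and] at hx hy
    have h2 := hgaps x.1 x.2 y.1 y.2 hx hy hxy
    simpa [Prod.ext_iff] using h2
  -- power sums vanish on S
  have hsum' : ∀ k : ℕ, ∑ x ∈ S, c x * lam x ^ k = 0 := by
    intro k
    have h0 := hsum k
    rw [← Finset.sum_product'] at h0
    rw [Finset.univ_product_univ] at h0
    rw [← Finset.sum_filter_add_sum_filter_not Finset.univ (fun x : Fin N × Fin N => x.1 ≠ x.2)]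
      at h0
    have hdiag : ∑ x ∈ Finset.univ.filter (fun x : Fin N × Fin N => ¬x.1 ≠ x.2),
        ((p x.2 : ℂ) - (p x.1 : ℂ)) *
          Complex.exp (Complex.I * ((h x.2 : ℂ) - (h x.1 : ℂ)) * (k : ℂ)) *
          ρ x.1 x.2 * H₁ x.2 x.1 = 0 := by
      apply Finset.sum_eq_zero
      intro x hx
      simp only [Finset.mem_filter, not_not] at hx
      rw [hx.2]
      ring
    rw [hdiag, add_zero] at h0
    rw [← h0]
    apply Finset.sum_congr rfl
    intro x hx
    have : Complex.I * ((h x.2 : ℂ) - (h x.1 : ℂ)) * (k : ℂ) =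
        (k : ℕ) * (Complex.I * ((h x.2 : ℂ) - (h x.1 : ℂ))) := by push_cast; ring
    rw [hc, hlam, this, Complex.exp_nat_mul]
    ring
  -- the target pair
  set s : Fin N × Fin N := (i, j) with hs
  have hsS : s ∈ S := by simp [hSdef, hs, hij]
  set Q : Polynomial ℂ := ∏ t ∈ S.erase s, (X - C (lam t)) with hQ
  have key : ∑ x ∈ S, c x * Q.eval (lam x) = 0 := by
    have heval : ∀ x : Fin N × Fin N,
        Q.eval (lam x) = ∑ k ∈ Finset.range (Q.natDegree + 1), Q.coeff k * lam x ^ k := by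
      intro x
      exact Polynomial.eval_eq_sum_range (p := Q) (lam x)
    calc ∑ x ∈ S, c x * Q.eval (lam x)
        = ∑ x ∈ S, ∑ k ∈ Finset.range (Q.natDegree + 1), Q.coeff k * (c x * lam x ^ k) := by
          apply Finset.sum_congr rfl
          intro x _
          rw [heval x, Finset.mul_sum]
          apply Finset.sum_congr rfl
          intro k _
          ring
      _ = ∑ k ∈ Finset.range (Q.natDegree + 1), Q.coeff k * ∑ x ∈ S, c x * lam x ^ k := by
          rw [Finset.sum_comm]
          apply Finset.sum_congr rfl
          intro k _
          rw [Finset.mul_sum]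
      _ = 0 := by
          apply Finset.sum_eq_zero
          intro k _
          rw [hsum' k, mul_zero]
  have hsingle : ∑ x ∈ S, c x * Q.eval (lam x) = c s * Q.eval (lam s) := by
    apply Finset.sum_eq_single_of_mem s hsS
    intro x hx hxs
    have : Q.eval (lam x) = 0 := by
      rw [hQ, Polynomial.eval_prod]
      apply Finset.prod_eq_zero (Finset.mem_erase.mpr ⟨hxs, hx⟩)
      simp
    rw [this, mul_zero]
  have hQs : Q.eval (lam s) ≠ 0 := by
    rw [hQ, Polynomial.eval_prod]
    apply Finset.prod_ne_zero_iff.mpr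
    intro t ht
    have htS := Finset.mem_of_mem_erase ht
    have hts : t ≠ s := Finset.ne_of_mem_erase ht
    simp only [Polynomial.eval_sub, Polynomial.eval_X, Polynomial.eval_C]
    intro hcon
    exact hts (hinj t htS s hsS (by linear_combination -hcon))
  have hcs : c s = 0 := by
    have := hsingle ▸ key
    exact (mul_eq_zero.mp this).resolve_right hQs
  -- extract ρ i j = 0
  rw [hc] at hcs
  simp only [hs] at hcs
  have hp' : (p j : ℂ) - (p i : ℂ) ≠ 0 := by
    intro hcon
    have : (p j : ℂ) = (p i : ℂ) := by linear_combination hcon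
    exact hij (hp (Complex.ofReal_injective this)).symm
  have hH : H₁ j i ≠ 0 := hH₁ i j hij
  rcases mul_eq_zero.mp hcs with h1 | h2
  · rcases mul_eq_zero.mp h1 with h3 | h4
    · exact absurd h3 hp'
    · exact h4
  · exact absurd h2 hH
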